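/- Every automorphism of the free group F(A,B) of rank two sends the commutator [A,B] = ABA⁻¹B⁻¹ to a conjugate of [A,B] or of its inverse [B,A]. -/

import Mathlib

abbrev F2 := FreeGroup Bool

def A : F2 := FreeGroup.of true

def B : F2 := FreeGroup.of false

/-- `(x, y)` is a basis (free generating pair) of the free group `F2 = F(A,B)`. -/
def IsBasis (x y : F2) : Prop := ∃ e : F2 ≃* F2, e A = x ∧ e B = y

/-- `w` is primitive: it is part of some basis of `F2`. -/
def IsPrimitive (w : F2) : Prop := ∃ x y : F2, IsBasis x y ∧ (w = x ∨ w = y)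

namespace NielsenWord

abbrev V := Bool × Bool

/-- inverse of a single letter -/
def inv1 (a : V) : V := (a.1, !a.2)

@[simp] lemma inv1_inv1 (a : V) : inv1 (inv1 a) = a := by
  cases a; simp [inv1]

lemma inv1_injective : Function.Injective inv1 := by
  intro a b h; rw [← inv1_inv1 a, h, inv1_inv1]

lemma inv1_eq_comm {a b : V} : inv1 a = b ↔ a = inv1 b := by
  constructor <;> rintro rfl <;> simp

/-- The relation between consecutive letters of a reduced word. -/
def Rel (a b : V) : Prop := ¬(a.1 = b.1 ∧ a.2 = !b.2)

lemma rel_iff {a b : V} : Rel a b ↔ a ≠ inv1 b := by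
  unfold Rel inv1
  constructor
  · intro h hab; apply h; rw [hab]; exact ⟨rfl, rfl⟩
  · intro h ⟨h1, h2⟩; exact h (Prod.ext h1 h2)

lemma rel_comm {a b : V} : Rel a b ↔ Rel b a := by
  rw [rel_iff, rel_iff]
  constructor <;> intro h hh <;> apply h
  · rw [hh, inv1_inv1]
  · rw [hh, inv1_inv1]

def Reduced (w : List V) : Prop := List.Chain' Rel w

lemma Reduced.nil : Reduced [] := List.isChain_nil

/-- `reduce` fixes reduced words. -/
lemma Reduced.reduce_eq {w : List V} (h : Reduced w) : FreeGroup.reduce w = w := by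
  induction w with
  | nil => rfl
  | cons a t ih =>
    have ht : Reduced t := h.tail
    rw [FreeGroup.reduce.cons, ih ht]
    cases t with
    | nil => rfl
    | cons b t' =>
      have hab : Rel a b := List.isChain_cons_cons.1 h |>.1
      simp only [Rel] at hab
      simp [if_neg hab]

/-- the result of `reduce` is reduced. -/
lemma reduced_reduce (w : List V) : Reduced (FreeGroup.reduce w) := by
  induction w with
  | nil => exact Reduced.nil
  | cons a t ih =>
    rw [FreeGroup.reduce.cons]
    rcases hr : FreeGroup.reduce t with _ | ⟨b, t'⟩
    · simp [Reduced]
      exact List.isChain_singleton a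
    · rw [hr] at ih
      by_cases hc : a.1 = b.1 ∧ a.2 = !b.2
      · simp only [if_pos hc]
        exact ih.tail
      · simp only [if_neg hc]
        exact List.isChain_cons_cons.2 ⟨hc, ih⟩

lemma reduced_toWord (x : FreeGroup Bool) : Reduced x.toWord := by
  rcases x with ⟨L⟩
  rw [FreeGroup.quot_mk_eq_mk, FreeGroup.toWord_mk]
  exact reduced_reduce L

lemma Reduced.toWord_mk {w : List V} (h : Reduced w) : (FreeGroup.mk w).toWord = w := by
  rw [FreeGroup.toWord_mk, h.reduce_eq]

lemma Reduced.append_left {w₁ w₂ : List V} (h : Reduced (w₁ ++ w₂)) : Reduced w₁ :=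
  (List.isChain_append.1 h).1

lemma Reduced.append_right {w₁ w₂ : List V} (h : Reduced (w₁ ++ w₂)) : Reduced w₂ :=
  (List.isChain_append.1 h).2.1

lemma Reduced.take {w : List V} (h : Reduced w) (n : ℕ) : Reduced (w.take n) := by
  have := h
  rw [← List.take_append_drop n w] at this
  exact this.append_left

lemma Reduced.drop {w : List V} (h : Reduced w) (n : ℕ) : Reduced (w.drop n) := by
  have := h
  rw [← List.take_append_drop n w] at this
  exact this.append_right

/-- cancellation length: first argument is the REVERSED left word. -/
def cancLen : List V → List V → ℕ
  | a :: as, b :: bs => if b = inv1 a then cancLen as bs + 1 else 0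
  | _, _ => 0

lemma cancLen_nil_left (b : List V) : cancLen [] b = 0 := by cases b <;> rfl

lemma cancLen_cons (a : V) (as : List V) (b : V) (bs : List V) :
    cancLen (a :: as) (b :: bs) = if b = inv1 a then cancLen as bs + 1 else 0 := rfl

lemma cancLen_nil_right (a : List V) : cancLen a [] = 0 := by cases a <;> rfl

lemma cancLen_le_left : ∀ (ra b : List V), cancLen ra b ≤ ra.length
  | [], b => by rw [cancLen_nil_left]; simp
  | a :: as, [] => by rw [cancLen_nil_right]; simp
  | a :: as, b :: bs => by
    rw [cancLen_cons]
    split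
    · have := cancLen_le_left as bs
      simpa using this
    · simp

lemma cancLen_le_right : ∀ (ra b : List V), cancLen ra b ≤ b.length
  | [], b => by rw [cancLen_nil_left]; simp
  | a :: as, [] => by rw [cancLen_nil_right]; simp
  | a :: as, b :: bs => by
    rw [cancLen_cons]
    split
    · have := cancLen_le_right as bs
      simpa using this
    · simp

/-- characterisation of `k ≤ cancLen` via `take`. -/
lemma le_cancLen_iff : ∀ (k : ℕ) (ra b : List V), k ≤ ra.length → k ≤ b.length →
    (k ≤ cancLen ra b ↔ b.take k = (ra.take k).map inv1)
  | 0, ra, b => by simp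
  | k + 1, [], b => by simp
  | k + 1, a :: as, [] => by simp
  | k + 1, a :: as, b :: bs => by
    intro h1 h2
    simp only [List.length_cons, add_le_add_iff_right] at h1 h2
    by_cases hb : b = inv1 a
    · rw [cancLen_cons, if_pos hb]
      simp only [List.take_succ_cons, List.map_cons, List.cons.injEq]
      rw [Nat.add_le_add_iff_right, le_cancLen_iff k as bs h1 h2]
      tauto
    · rw [cancLen_cons, if_neg hb]
      simp only [List.take_succ_cons, List.map_cons, List.cons.injEq]
      constructor
      · omega
      · tauto

lemma cancLen_stop : ∀ (ra b : List V) (h1 : cancLen ra b < ra.length)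
    (h2 : cancLen ra b < b.length),
    b.get ⟨cancLen ra b, h2⟩ ≠ inv1 (ra.get ⟨cancLen ra b, h1⟩)
  | [], b => by intro h; rw [cancLen_nil_left] at h; simp at h
  | a :: as, [] => by intro _ h; rw [cancLen_nil_right] at h; simp at h
  | a :: as, b :: bs => by
    intro h1 h2
    by_cases hb : b = inv1 a
    · have hc : cancLen (a :: as) (b :: bs) = cancLen as bs + 1 := by
        rw [cancLen_cons, if_pos hb]
      rw [hc] at h1 h2
      simp only [hc]
      simp only [List.length_cons, add_lt_add_iff_right] at h1 h2
      simpa using cancLen_stop as bs h1 h2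
    · have hc : cancLen (a :: as) (b :: bs) = 0 := by
        rw [cancLen_cons, if_neg hb]
      simp only [hc]
      simpa using hb

/-- cancLen only depends on a sufficiently long prefix of the first argument. -/
lemma cancLen_congr : ∀ (m : ℕ) (ra ra' b : List V), ra.take m = ra'.take m →
    cancLen ra' b < m → cancLen ra b = cancLen ra' b
  | 0, ra, ra', b => by omega
  | m + 1, [], ra', b => by
    intro h hlt
    have : ra'.take (m+1) = [] := h.symm
    rcases ra' with _ | ⟨a', as'⟩
    · rfl
    · simp at this
  | m + 1, a :: as, ra', b => by
    intro h hlt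
    rcases ra' with _ | ⟨a', as'⟩
    · simp at h
    · simp only [List.take_succ_cons, List.cons.injEq] at h
      obtain ⟨rfl, htail⟩ := h
      rcases b with _ | ⟨b, bs⟩
      · rw [cancLen_nil_right, cancLen_nil_right]
      · unfold cancLen
        by_cases hb : b = inv1 a
        · rw [if_pos hb, if_pos hb]
          have hlt' : cancLen as' bs < m := by
            have : cancLen (a :: as') (b :: bs) = cancLen as' bs + 1 := by
              rw [cancLen_cons, if_pos hb]
            omega
          rw [cancLen_congr m as as' bs htail hlt']
        · rw [if_neg hb, if_neg hb]

/-- `mk` is unchanged by performing the cancellation. -/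
lemma mk_cancel : ∀ (ra b : List V),
    FreeGroup.mk (ra.reverse ++ b) =
      FreeGroup.mk ((ra.drop (cancLen ra b)).reverse ++ b.drop (cancLen ra b))
  | [], b => by rw [cancLen_nil_left]; rfl
  | a :: as, [] => by rw [cancLen_nil_right]; rfl
  | a :: as, b :: bs => by
    by_cases hb : b = inv1 a
    · have hc : cancLen (a :: as) (b :: bs) = cancLen as bs + 1 := by
        rw [cancLen_cons, if_pos hb]
      rw [hc]
      have step : FreeGroup.Red.Step ((a :: as).reverse ++ b :: bs) (as.reverse ++ bs) := by
        have : (a :: as).reverse ++ b :: bs = as.reverse ++ (a.1, a.2) :: (a.1, !a.2) :: bs := by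
          subst hb
          simp [inv1]
        rw [this]
        exact FreeGroup.Red.Step.not
      have h1 : FreeGroup.mk ((a :: as).reverse ++ b :: bs) = FreeGroup.mk (as.reverse ++ bs) := by
        rw [← FreeGroup.quot_mk_eq_mk, ← FreeGroup.quot_mk_eq_mk]
        exact Quot.sound step
      rw [h1, mk_cancel as bs]
      simp
    · have hc : cancLen (a :: as) (b :: bs) = 0 := by
        rw [cancLen_cons, if_neg hb]
      rw [hc]
      simp


open FreeGroup

/-- The fundamental theorem: reduced word of a product. -/
theorem toWord_mul (x y : FreeGroup Bool) :
    (x * y).toWord = x.toWord.take (x.toWord.length - cancLen x.toWord.reverse y.toWord)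
      ++ y.toWord.drop (cancLen x.toWord.reverse y.toWord) := by
  set a := x.toWord with ha
  set b := y.toWord with hb
  set k := cancLen a.reverse b with hk
  have hkla : k ≤ a.length := by
    simpa using cancLen_le_left a.reverse b
  have hklb : k ≤ b.length := cancLen_le_right a.reverse b
  have htake : (a.reverse.drop k).reverse = a.take (a.length - k) := by
    rw [List.reverse_drop]
    simp
  have hred : Reduced (a.take (a.length - k) ++ b.drop k) := by
    rw [Reduced, List.Chain', List.isChain_append]
    refine ⟨(reduced_toWord x).take _, (reduced_toWord y).drop _, ?_⟩
    intro p hp q hq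
    by_cases hka : k < a.length
    swap
    · exfalso
      have : a.length - k = 0 := by omega
      rw [this] at hp
      simp at hp
    by_cases hkb : k < b.length
    swap
    · exfalso
      rw [List.drop_eq_nil_of_le (by omega)] at hq
      simp at hq
    have hlt : a.length - k - 1 < (a.take (a.length - k)).length := by
      rw [List.length_take]; omega
    have hp' : p = a[a.length - k - 1]'(by omega) := by
      rw [List.getLast?_eq_getElem?, List.length_take] at hp
      have : (a.length - k) ⊓ a.length - 1 = a.length - k - 1 := by omega
      rw [this, List.getElem?_eq_getElem hlt] at hp
      rw [List.getElem_take] at hp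
      exact (Option.some_injective _ hp).symm
    have hq' : q = b[k]'hkb := by
      rw [List.head?_eq_getElem?] at hq
      have hlt2 : 0 < (b.drop k).length := by rw [List.length_drop]; omega
      rw [List.getElem?_eq_getElem hlt2] at hq
      rw [List.getElem_drop] at hq
      simp only [Nat.add_zero] at hq
      exact (Option.some_injective _ hq).symm
    have hstop := cancLen_stop a.reverse b (by simpa using hka) hkb
    rw [rel_iff, hp', hq']
    intro hcon
    apply hstop
    rw [List.get_eq_getElem, List.get_eq_getElem, List.getElem_reverse]
    have hidx : a[a.length - 1 - cancLen a.reverse b]'(by omega)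
        = a[a.length - k - 1]'(by omega) := by
      congr 1
      omega
    rw [hidx, hcon, inv1_inv1]
  have hmk : x * y = FreeGroup.mk (a.take (a.length - k) ++ b.drop k) := by
    have h1 : x * y = FreeGroup.mk (a ++ b) := by
      rw [← FreeGroup.mk_toWord (x := x), ← FreeGroup.mk_toWord (x := y), FreeGroup.mul_mk]
    have h2 := mk_cancel a.reverse b
    rw [List.reverse_reverse] at h2
    rw [h1, h2, ← hk, htake]
  rw [hmk, hred.toWord_mk]

lemma norm_def (x : FreeGroup Bool) : x.norm = x.toWord.length := rfl

/-- cancellation between `x` and `y`. -/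
def cl (x y : FreeGroup Bool) : ℕ := cancLen x.toWord.reverse y.toWord

lemma cl_le_left (x y : FreeGroup Bool) : cl x y ≤ x.norm := by
  rw [norm_def]
  simpa [cl] using cancLen_le_left x.toWord.reverse y.toWord

lemma cl_le_right (x y : FreeGroup Bool) : cl x y ≤ y.norm :=
  cancLen_le_right x.toWord.reverse y.toWord

lemma toWord_mul' (x y : FreeGroup Bool) :
    (x * y).toWord = x.toWord.take (x.toWord.length - cl x y) ++ y.toWord.drop (cl x y) :=
  toWord_mul x y

lemma norm_mul_canc (x y : FreeGroup Bool) :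
    (x * y).norm + 2 * cl x y = x.norm + y.norm := by
  have hL := cl_le_left x y
  have hR := cl_le_right x y
  rw [norm_def] at hL
  rw [norm_def] at hR
  rw [norm_def, norm_def, norm_def]
  have h1 : (x*y).toWord.length
      = (x.toWord.length - cl x y) + (y.toWord.length - cl x y) := by
    rw [toWord_mul', List.length_append, List.length_take, List.length_drop]
    omega
  omega

lemma rinv_word (x : FreeGroup Bool) : (x⁻¹).toWord.reverse = x.toWord.map inv1 := by
  rw [FreeGroup.toWord_inv]
  show ((x.toWord.map (fun g : V => (g.1, !g.2))).reverse).reverse = _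
  rw [List.reverse_reverse]
  rfl

lemma inv_word (x : FreeGroup Bool) : (x⁻¹).toWord = x.toWord.reverse.map inv1 := by
  rw [FreeGroup.toWord_inv, List.map_reverse]
  rfl

lemma le_cl_iff {k : ℕ} {x y : FreeGroup Bool} (hx : k ≤ x.norm) (hy : k ≤ y.norm) :
    k ≤ cl x y ↔ y.toWord.take k = (x.toWord.reverse.take k).map inv1 :=
  le_cancLen_iff k x.toWord.reverse y.toWord (by simpa [norm_def] using hx) hy

/-- symmetry of cancellation under inversion. -/
lemma cl_inv (x y : FreeGroup Bool) : cl x y = cl y⁻¹ x⁻¹ := by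
  have key : ∀ k, k ≤ cl x y ↔ k ≤ cl y⁻¹ x⁻¹ := by
    intro k
    by_cases hx : k ≤ x.norm
    swap
    · constructor <;> intro h <;> exfalso
      · exact hx (le_trans h (cl_le_left x y))
      · have := le_trans h (cl_le_right y⁻¹ x⁻¹)
        rw [FreeGroup.norm_inv_eq] at this
        exact hx this
    by_cases hy : k ≤ y.norm
    swap
    · constructor <;> intro h <;> exfalso
      · exact hy (le_trans h (cl_le_right x y))
      · have := le_trans h (cl_le_left y⁻¹ x⁻¹)
        rw [FreeGroup.norm_inv_eq] at this
        exact hy this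
    rw [le_cl_iff hx hy, le_cl_iff (by rwa [FreeGroup.norm_inv_eq]) (by rwa [FreeGroup.norm_inv_eq])]
    rw [rinv_word, inv_word]
    rw [List.map_take, List.map_take, List.map_map]
    have hmm : (inv1 ∘ inv1) = id := by funext z; simp
    rw [hmm, List.map_id]
    constructor
    · intro h; rw [h]
    · intro h; rw [← h]
  exact Nat.le_antisymm ((key _).1 le_rfl) ((key _).2 le_rfl)

lemma cl_pointwise {x y : FreeGroup Bool} {k j : ℕ} (hk : k ≤ cl x y) (hj : j < k) :
    y.toWord[j]? = Option.map inv1 (x.toWord[x.toWord.length - 1 - j]?) := by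
  have hx : k ≤ x.norm := le_trans hk (cl_le_left x y)
  have hy : k ≤ y.norm := le_trans hk (cl_le_right x y)
  have h := (le_cl_iff hx hy).1 hk
  have := congrArg (fun l => l[j]?) h
  simp only [List.getElem?_take, if_pos hj, List.getElem?_map] at this
  rw [this, List.getElem?_reverse]
  rw [norm_def] at hx
  omega

/-- self-cancellation is less than half the length for nontrivial elements. -/
lemma two_cl_self_lt {x : FreeGroup Bool} (hx : x ≠ 1) : 2 * cl x x < x.norm := by
  by_contra hcon
  push_neg at hcon
  have hk : cl x x ≤ x.norm := cl_le_left x x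
  have hn1 : 1 ≤ x.norm := by
    have : x.norm ≠ 0 := fun h => hx (FreeGroup.norm_eq_zero.1 h)
    omega
  have hnd : x.norm = x.toWord.length := norm_def x
  set j := (x.norm - 1) / 2 with hj
  have hjk : j < cl x x := by omega
  have hjn : j < x.toWord.length := by omega
  have hpt := cl_pointwise (le_refl (cl x x)) hjk
  rcases Nat.even_or_odd x.norm with ⟨t, ht⟩ | ⟨t, ht⟩
  · -- even length : adjacent inverse letters, contradicts reducedness
    have hjj : x.toWord.length - 1 - j = j + 1 := by omega
    rw [hjj] at hpt
    have hj1 : j + 1 < x.toWord.length := by omega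
    rw [List.getElem?_eq_getElem hjn, List.getElem?_eq_getElem hj1] at hpt
    simp only [Option.map_some] at hpt
    injection hpt with hpt2
    have hred := reduced_toWord x
    rw [Reduced, List.Chain', List.isChain_iff_getElem] at hred
    have hrel := hred j (by omega)
    rw [rel_iff] at hrel
    apply hrel
    exact hpt2
  · -- odd length : middle letter is its own inverse
    have hjj : x.toWord.length - 1 - j = j := by omega
    rw [hjj] at hpt
    rw [List.getElem?_eq_getElem hjn] at hpt
    simp only [Option.map_some] at hpt
    injection hpt with hpt2
    have h2 := congrArg Prod.snd hpt2
    simp only [inv1] at h2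
    exact Bool.not_ne_self _ h2.symm


abbrev F := FreeGroup Bool

section Chain

variable (S : Set F)
variable (hS1 : ∀ g ∈ S, g ≠ 1)
variable (hS2 : ∀ g ∈ S, ∀ h ∈ S, g * h ≠ 1 → 2 * cl g h ≤ g.norm ∧ 2 * cl g h ≤ h.norm)
variable (hS3 : ∀ g₁ ∈ S, ∀ g ∈ S, ∀ g₂ ∈ S, g₁ * g ≠ 1 → g * g₂ ≠ 1 →
    cl g₁ g + cl g g₂ < g.norm)

include hS1 hS2 hS3 in
theorem chain_main : ∀ (n : ℕ) (l : List F) (g : F), l.length ≤ n →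
    (∀ a ∈ l, a ∈ S) → g ∈ S → List.Chain' (fun a b => a * b ≠ 1) (l ++ [g]) →
    ∃ (kk : ℕ) (t : List V),
      ((l ++ [g]).prod).toWord = t ++ g.toWord.drop kk ∧ l.length ≤ t.length ∧
      kk < g.norm ∧
      ((l = [] ∧ kk = 0) ∨
        (∃ h l₀, l = l₀ ++ [h] ∧ h ∈ S ∧ h * g ≠ 1 ∧ kk = cl h g)) := by
  intro n
  induction n with
  | zero =>
    intro l g hl _ hgS _
    have hl0 : l = [] := List.eq_nil_of_length_eq_zero (by omega)
    subst hl0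
    refine ⟨0, [], ?_, by simp, ?_, Or.inl ⟨rfl, rfl⟩⟩
    · simp
    · have := hS1 g hgS
      have : g.norm ≠ 0 := fun h => this (FreeGroup.norm_eq_zero.1 h)
      omega
  | succ n ih =>
    intro l g hl hmem hgS hchain
    rcases List.eq_nil_or_concat l with rfl | ⟨l₀, h, rfl⟩
    · refine ⟨0, [], ?_, by simp, ?_, Or.inl ⟨rfl, rfl⟩⟩
      · simp
      · have := hS1 g hgS
        have : g.norm ≠ 0 := fun hh => this (FreeGroup.norm_eq_zero.1 hh)
        omega
    · -- l = l₀ ++ [h]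
      simp only [List.concat_eq_append] at hl hmem hchain ⊢
      have hhS : h ∈ S := hmem h (by simp)
      have hmem₀ : ∀ a ∈ l₀, a ∈ S := fun a ha => hmem a (by simp [ha])
      have hsplit := List.isChain_append.1 hchain
      have hchain₀ : List.Chain' (fun a b => a * b ≠ 1) (l₀ ++ [h]) := hsplit.1
      have hadj : h * g ≠ 1 := by
        have := hsplit.2.2 h (by rw [List.getLast?_concat]; rfl) g (by simp)
        exact this
      have hlen₀ : l₀.length ≤ n := by
        simp only [List.length_append, List.length_singleton] at hl
        omega
      obtain ⟨kk₀, t₀, hw, hlent, hkk₀, hform⟩ := ih l₀ h hlen₀ hmem₀ hhS hchain₀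
      set P := (l₀ ++ [h]).prod with hP
      set k := cl h g with hkdef
      have hg1 : g ≠ 1 := hS1 g hgS
      have hgn : 1 ≤ g.norm := by
        have : g.norm ≠ 0 := fun hh => hg1 (FreeGroup.norm_eq_zero.1 hh)
        omega
      have hk2 := hS2 h hhS g hgS hadj
      have hkg : k < g.norm := by omega
      -- no-bad condition gives kk₀ + k < h.norm
      have hno : kk₀ + k < h.norm := by
        rcases hform with ⟨rfl, rfl⟩ | ⟨h₁, l₁, rfl, hh₁S, hadj₁, rfl⟩
        · have hh1 : h ≠ 1 := hS1 h hhS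
          have : h.norm ≠ 0 := fun hh => hh1 (FreeGroup.norm_eq_zero.1 hh)
          omega
        · exact hS3 h₁ hh₁S h hhS g hgS hadj₁ hadj
      -- compute the cancellation between P and g
      have hhn : h.norm = h.toWord.length := norm_def h
      have hkk₀' : kk₀ ≤ h.toWord.length := by omega
      have hsfx : (h.toWord.drop kk₀).reverse = h.toWord.reverse.take (h.toWord.length - kk₀) := by
        rw [List.reverse_drop]
      have hPrev : P.toWord.reverse
          = h.toWord.reverse.take (h.toWord.length - kk₀) ++ t₀.reverse := by
        rw [hw, List.reverse_append, hsfx]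
      have hagree : P.toWord.reverse.take (h.toWord.length - kk₀)
          = h.toWord.reverse.take (h.toWord.length - kk₀) := by
        rw [hPrev, List.take_append]
        have hlen2 : (h.toWord.reverse.take (h.toWord.length - kk₀)).length
            = h.toWord.length - kk₀ := by
          rw [List.length_take, List.length_reverse]
          omega
        rw [List.take_of_length_le (le_of_eq hlen2), hlen2]
        simp
      have hclPg : cl P g = k := by
        show cancLen P.toWord.reverse g.toWord = k
        rw [cancLen_congr (h.toWord.length - kk₀) P.toWord.reverse h.toWord.reverse g.toWord
          hagree (by show cl h g < _; omega)]
        rfl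
      -- now expand the product
      have hprodeq : (l₀ ++ [h] ++ [g]).prod = P * g := by
        rw [List.prod_append, List.prod_singleton]
      set s := h.toWord.drop kk₀ with hs
      have hslen : s.length = h.toWord.length - kk₀ := by
        rw [hs, List.length_drop]
      have hPw : (P * g).toWord
          = P.toWord.take (P.toWord.length - k) ++ g.toWord.drop k := by
        rw [toWord_mul', hclPg]
      have hPlen : P.toWord.length = t₀.length + s.length := by
        rw [hw, List.length_append]
      have hks : k < s.length := by omega
      have htake : P.toWord.take (P.toWord.length - k) = t₀ ++ s.take (s.length - k) := by
        rw [hw, List.take_append]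
        have h1 : (t₀ ++ s).length - k - t₀.length = s.length - k := by
          simp only [List.length_append]; omega
        have h2 : t₀.length ≤ (t₀ ++ s).length - k := by
          simp only [List.length_append]; omega
        rw [List.take_of_length_le h2, h1]
      refine ⟨k, t₀ ++ s.take (s.length - k), ?_, ?_, hkg,
        Or.inr ⟨h, l₀, rfl, hhS, hadj, rfl⟩⟩
      · rw [hprodeq, hPw, htake, List.append_assoc]
      · simp only [List.length_append, List.length_take, List.length_singleton]
        have hmin : min (s.length - k) s.length = s.length - k := min_eq_left (by omega)
        omega

include hS1 hS2 hS3 in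
theorem chain_norm (l : List F) (g : F)
    (hmem : ∀ a ∈ l, a ∈ S) (hgS : g ∈ S)
    (hchain : List.Chain' (fun a b => a * b ≠ 1) (l ++ [g])) :
    l.length + 1 ≤ ((l ++ [g]).prod).norm := by
  obtain ⟨kk, t, hw, hlent, hkk, _⟩ :=
    chain_main S hS1 hS2 hS3 l.length l g le_rfl hmem hgS hchain
  rw [norm_def, hw, List.length_append, List.length_drop]
  rw [norm_def] at hkk
  omega

end Chain


section Framework

open Subgroup

/-- the commutator -/
def Q (x y : F) : F := x * y * x⁻¹ * y⁻¹

/-- the target property: the commutator is conjugate to `[a,b]` or `[b,a]`. -/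
def Pp (x y : F) : Prop :=
  IsConj (Q x y) (Q (FreeGroup.of true) (FreeGroup.of false)) ∨
  IsConj (Q x y) (Q (FreeGroup.of false) (FreeGroup.of true))

lemma Q_swap (x y : F) : Q y x = (Q x y)⁻¹ := by unfold Q; group

lemma isConj_inv_of_isConj {a b : F} (h : IsConj a b) : IsConj a⁻¹ b⁻¹ := by
  obtain ⟨c, hc⟩ := isConj_iff.1 h
  exact isConj_iff.2 ⟨c, by rw [← hc]; group⟩

lemma Pp_of_conj {x y x' y' : F} (h : IsConj (Q x' y') (Q x y)) (hp : Pp x y) : Pp x' y' := by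
  rcases hp with h1 | h1
  · exact Or.inl (h.trans h1)
  · exact Or.inr (h.trans h1)

lemma Pp_of_conj_inv {x y x' y' : F} (h : IsConj (Q x' y') (Q x y)⁻¹) (hp : Pp x y) :
    Pp x' y' := by
  have e : Q (FreeGroup.of false) (FreeGroup.of true)
      = (Q (FreeGroup.of true) (FreeGroup.of false))⁻¹ := by unfold Q; group
  rcases hp with h1 | h1
  · exact Or.inr (by rw [e]; exact h.trans (isConj_inv_of_isConj h1))
  · exact Or.inl (by
      have := h.trans (isConj_inv_of_isConj h1)
      rwa [e, inv_inv] at this)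

/-- a counterexample pair -/
def Ctrex (x y : F) : Prop := closure ({x, y} : Set F) = ⊤ ∧ ¬ Pp x y

/-- a counterexample pair of minimal total length -/
def MinCtrex (x y : F) : Prop :=
  Ctrex x y ∧ ∀ x' y' : F, Ctrex x' y' → x.norm + y.norm ≤ x'.norm + y'.norm

lemma closure_pair_eq {x y x' y' : F}
    (h1 : x' ∈ closure ({x, y} : Set F)) (h2 : y' ∈ closure ({x, y} : Set F))
    (h3 : x ∈ closure ({x', y'} : Set F)) (h4 : y ∈ closure ({x', y'} : Set F)) :
    closure ({x', y'} : Set F) = closure ({x, y} : Set F) := by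
  apply le_antisymm
  · rw [closure_le]
    rintro z (rfl | rfl) <;> simpa
  · rw [closure_le]
    rintro z (rfl | rfl) <;> simpa

lemma mem_pair_left (x y : F) : x ∈ closure ({x, y} : Set F) :=
  subset_closure (by simp)

lemma mem_pair_right (x y : F) : y ∈ closure ({x, y} : Set F) :=
  subset_closure (by simp)

/-- transfer of `Ctrex` along a pair move. -/
lemma ctrex_transfer {x y x' y' : F}
    (hcl : closure ({x', y'} : Set F) = closure ({x, y} : Set F))
    (hq : IsConj (Q x' y') (Q x y) ∨ IsConj (Q x' y') (Q x y)⁻¹) :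
    Ctrex x y → Ctrex x' y' := by
  rintro ⟨hc, hp⟩
  refine ⟨by rw [hcl, hc], fun hp' => hp ?_⟩
  rcases hq with h | h
  · exact Pp_of_conj h.symm hp'
  · have h2 : IsConj (Q x y) (Q x' y')⁻¹ := by
      have := isConj_inv_of_isConj h
      rw [inv_inv] at this
      exact this.symm
    exact Pp_of_conj_inv h2 hp'

section moves

variable {x y : F} (hc : Ctrex x y)

include hc

lemma ct1 : Ctrex (x * y) y := by
  refine ctrex_transfer (closure_pair_eq ?_ ?_ ?_ ?_) ?_ hc
  · exact mul_mem (mem_pair_left x y) (mem_pair_right x y)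
  · exact mem_pair_right x y
  · have h := mul_mem (mem_pair_left (x*y) y) (inv_mem (mem_pair_right (x*y) y))
    simpa using h
  · exact mem_pair_right _ _
  · left
    rw [show Q (x * y) y = Q x y from by unfold Q; group]

lemma ct2 : Ctrex (x * y⁻¹) y := by
  refine ctrex_transfer (closure_pair_eq ?_ ?_ ?_ ?_) ?_ hc
  · exact mul_mem (mem_pair_left x y) (inv_mem (mem_pair_right x y))
  · exact mem_pair_right x y
  · have h := mul_mem (mem_pair_left (x*y⁻¹) y) (mem_pair_right (x*y⁻¹) y)
    simpa using h
  · exact mem_pair_right _ _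
  · left
    rw [show Q (x * y⁻¹) y = Q x y from by unfold Q; group]

lemma ct3 : Ctrex (y * x) y := by
  refine ctrex_transfer (closure_pair_eq ?_ ?_ ?_ ?_) ?_ hc
  · exact mul_mem (mem_pair_right x y) (mem_pair_left x y)
  · exact mem_pair_right x y
  · have h := mul_mem (inv_mem (mem_pair_right (y*x) y)) (mem_pair_left (y*x) y)
    simpa using h
  · exact mem_pair_right _ _
  · left
    exact isConj_iff.2 ⟨y⁻¹, by unfold Q; group⟩

lemma ct4 : Ctrex (y⁻¹ * x) y := by
  refine ctrex_transfer (closure_pair_eq ?_ ?_ ?_ ?_) ?_ hc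
  · exact mul_mem (inv_mem (mem_pair_right x y)) (mem_pair_left x y)
  · exact mem_pair_right x y
  · have h := mul_mem (mem_pair_right (y⁻¹*x) y) (mem_pair_left (y⁻¹*x) y)
    simpa using h
  · exact mem_pair_right _ _
  · left
    exact isConj_iff.2 ⟨y, by unfold Q; group⟩

lemma ct5 : Ctrex x (y * x) := by
  refine ctrex_transfer (closure_pair_eq ?_ ?_ ?_ ?_) ?_ hc
  · exact mem_pair_left x y
  · exact mul_mem (mem_pair_right x y) (mem_pair_left x y)
  · exact mem_pair_left _ _
  · have h := mul_mem (mem_pair_right x (y*x)) (inv_mem (mem_pair_left x (y*x)))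
    simpa using h
  · left
    rw [show Q x (y * x) = Q x y from by unfold Q; group]

lemma ct6 : Ctrex x (y * x⁻¹) := by
  refine ctrex_transfer (closure_pair_eq ?_ ?_ ?_ ?_) ?_ hc
  · exact mem_pair_left x y
  · exact mul_mem (mem_pair_right x y) (inv_mem (mem_pair_left x y))
  · exact mem_pair_left _ _
  · have h := mul_mem (mem_pair_right x (y*x⁻¹)) (mem_pair_left x (y*x⁻¹))
    simpa using h
  · left
    rw [show Q x (y * x⁻¹) = Q x y from by unfold Q; group]

lemma ct7 : Ctrex x (x * y) := by
  refine ctrex_transfer (closure_pair_eq ?_ ?_ ?_ ?_) ?_ hc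
  · exact mem_pair_left x y
  · exact mul_mem (mem_pair_left x y) (mem_pair_right x y)
  · exact mem_pair_left _ _
  · have h := mul_mem (inv_mem (mem_pair_left x (x*y))) (mem_pair_right x (x*y))
    simpa using h
  · left
    exact isConj_iff.2 ⟨x⁻¹, by unfold Q; group⟩

lemma ct8 : Ctrex x (x⁻¹ * y) := by
  refine ctrex_transfer (closure_pair_eq ?_ ?_ ?_ ?_) ?_ hc
  · exact mem_pair_left x y
  · exact mul_mem (inv_mem (mem_pair_left x y)) (mem_pair_right x y)
  · exact mem_pair_left _ _
  · have h := mul_mem (mem_pair_left x (x⁻¹*y)) (mem_pair_right x (x⁻¹*y))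
    simpa using h
  · left
    exact isConj_iff.2 ⟨x, by unfold Q; group⟩

lemma ct_swap : Ctrex y x := by
  refine ctrex_transfer (closure_pair_eq ?_ ?_ ?_ ?_) ?_ hc
  · exact mem_pair_right x y
  · exact mem_pair_left x y
  · exact mem_pair_right _ _
  · exact mem_pair_left _ _
  · right
    rw [Q_swap]

lemma ct_inv : Ctrex x⁻¹ y := by
  refine ctrex_transfer (closure_pair_eq ?_ ?_ ?_ ?_) ?_ hc
  · exact inv_mem (mem_pair_left x y)
  · exact mem_pair_right x y
  · have h := inv_mem (mem_pair_left x⁻¹ y)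
    simpa using h
  · exact mem_pair_right _ _
  · right
    exact isConj_iff.2 ⟨x, by unfold Q; group⟩

end moves

lemma minctrex_swap {x y : F} (h : MinCtrex x y) : MinCtrex y x :=
  ⟨ct_swap h.1, fun x' y' hc => by
    have := h.2 x' y' hc
    omega⟩

lemma minctrex_inv {x y : F} (h : MinCtrex x y) : MinCtrex x⁻¹ y :=
  ⟨ct_inv h.1, fun x' y' hc => by
    have := h.2 x' y' hc
    rw [FreeGroup.norm_inv_eq]
    omega⟩

/-- `ℤ × ℤ` is not cyclic: auxiliary hom. -/
def abQ : F →* Multiplicative (ℤ × ℤ) :=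
  FreeGroup.lift (fun b => Multiplicative.ofAdd (if b then (1, 0) else (0, 1)))

lemma abQ_of (b : Bool) :
    abQ (FreeGroup.of b) = Multiplicative.ofAdd (if b then (1, 0) else (0, 1)) :=
  FreeGroup.lift_apply_of

lemma not_cyclic (w : F) : closure ({w} : Set F) ≠ ⊤ := by
  intro hw
  have hA : FreeGroup.of true ∈ closure ({w} : Set F) := by rw [hw]; trivial
  have hB : FreeGroup.of false ∈ closure ({w} : Set F) := by rw [hw]; trivial
  rw [Subgroup.mem_closure_singleton] at hA hB
  obtain ⟨n, hn⟩ := hA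
  obtain ⟨m, hm⟩ := hB
  have hn' := congrArg (fun z => (abQ z).toAdd) hn
  have hm' := congrArg (fun z => (abQ z).toAdd) hm
  simp only [map_zpow, toAdd_zpow, abQ_of, if_true, if_false, toAdd_ofAdd] at hn' hm'
  set q := (abQ w).toAdd with hq
  have e1 : n * q.1 = 1 := by
    have := congrArg Prod.fst hn'
    simpa [smul_eq_mul] using this
  have e2 : n * q.2 = 0 := by
    have := congrArg Prod.snd hn'
    simpa [smul_eq_mul] using this
  have e4 : m * q.2 = 1 := by
    have := congrArg Prod.snd hm'
    simpa [smul_eq_mul] using this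
  have hn0 : n ≠ 0 := by rintro rfl; simp at e1
  have hq2 : q.2 = 0 := by
    rcases mul_eq_zero.1 e2 with h | h
    · exact absurd h hn0
    · exact h
  rw [hq2, mul_zero] at e4
  exact one_ne_zero e4.symm

lemma sq_ne_one {x : F} (hx : x ≠ 1) : x * x ≠ 1 := by
  intro h
  have h1 := norm_mul_canc x x
  have h2 := two_cl_self_lt hx
  have h3 : (x * x).norm = 0 := by rw [h, FreeGroup.norm_one]
  have h4 : x.norm ≠ 0 := fun hh => hx (FreeGroup.norm_eq_zero.1 hh)
  omega

/-- distinctness facts for a generating pair -/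
lemma pair_facts {x y : F} (hc : closure ({x, y} : Set F) = ⊤) :
    x ≠ 1 ∧ y ≠ 1 ∧ x ≠ y ∧ x ≠ y⁻¹ ∧ x ≠ x⁻¹ ∧ y ≠ y⁻¹ := by
  have key : ∀ w : F, closure ({x, y} : Set F) ≤ closure ({w} : Set F) → False := by
    intro w hle
    exact not_cyclic w (top_le_iff.1 (hc ▸ hle))
  have hx1 : x ≠ 1 := by
    rintro rfl
    refine key y ?_
    rw [closure_le]
    rintro z (rfl | rfl)
    · exact one_mem _
    · exact subset_closure (Set.mem_singleton _)
  have hy1 : y ≠ 1 := by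
    rintro rfl
    refine key x ?_
    rw [closure_le]
    rintro z (rfl | rfl)
    · exact subset_closure (Set.mem_singleton _)
    · exact one_mem _
  refine ⟨hx1, hy1, ?_, ?_, ?_, ?_⟩
  · rintro rfl
    refine key x ?_
    rw [closure_le]
    rintro z (rfl | rfl) <;> exact subset_closure (Set.mem_singleton _)
  · rintro rfl
    refine key y ?_
    rw [closure_le]
    rintro z (rfl | rfl)
    · exact inv_mem (subset_closure (Set.mem_singleton _))
    · exact subset_closure (Set.mem_singleton _)
  · intro hxx
    exact sq_ne_one hx1 (by nth_rewrite 2 [hxx]; group)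
  · intro hyy
    exact sq_ne_one hy1 (by nth_rewrite 2 [hyy]; group)

/-- the symmetrised generating set -/
def Sset (x y : F) : Set F := {x, x⁻¹, y, y⁻¹}

lemma Sset_comm (x y : F) : Sset x y = Sset y x := by
  unfold Sset
  ext z
  simp only [Set.mem_insert_iff, Set.mem_singleton_iff]
  tauto

lemma Sset_inv_left (x y : F) : Sset x⁻¹ y = Sset x y := by
  unfold Sset
  ext z
  simp only [Set.mem_insert_iff, Set.mem_singleton_iff, inv_inv]
  tauto

lemma mem_Sset_ne_one {x y : F} (hc : closure ({x, y} : Set F) = ⊤) :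
    ∀ g ∈ Sset x y, g ≠ 1 := by
  obtain ⟨hx, hy, -, -, -, -⟩ := pair_facts hc
  rintro g (rfl | rfl | rfl | rfl)
  · exact hx
  · exact inv_ne_one.2 hx
  · exact hy
  · exact inv_ne_one.2 hy

/-- the N1 bounds from minimality : every product of two members of `Sset`
is at least as long as each factor, in cancellation form. -/
lemma mc_cl {x y : F} (hmc : MinCtrex x y) :
    ∀ g ∈ Sset x y, ∀ h ∈ Sset x y, g * h ≠ 1 →
      2 * cl g h ≤ g.norm ∧ 2 * cl g h ≤ h.norm := by
  obtain ⟨hct, hmin⟩ := hmc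
  obtain ⟨hx1, hy1, -, -, -, -⟩ := pair_facts hct.1
  -- norm bounds from minimality
  have bound : ∀ x' y' : F, Ctrex x' y' → x.norm + y.norm ≤ x'.norm + y'.norm := hmin
  have n1x : x.norm ≤ (x * y).norm := by have := bound _ _ (ct1 hct); omega
  have n1y : y.norm ≤ (x * y).norm := by
    have := bound _ _ (ct7 hct); omega
  have n2x : x.norm ≤ (x * y⁻¹).norm := by have := bound _ _ (ct2 hct); omega
  have n2y : y.norm ≤ (x * y⁻¹).norm := by
    have h6 := bound _ _ (ct6 hct)
    have e : (y * x⁻¹).norm = (x * y⁻¹).norm := by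
      rw [← FreeGroup.norm_inv_eq (x := y * x⁻¹)]
      congr 1
      group
    omega
  have n3x : x.norm ≤ (x⁻¹ * y).norm := by
    have h4 := bound _ _ (ct4 hct)
    have e : (y⁻¹ * x).norm = (x⁻¹ * y).norm := by
      rw [← FreeGroup.norm_inv_eq (x := y⁻¹ * x)]
      congr 1
      group
    omega
  have n3y : y.norm ≤ (x⁻¹ * y).norm := by have := bound _ _ (ct8 hct); omega
  have n4x : x.norm ≤ (x⁻¹ * y⁻¹).norm := by
    have h3 := bound _ _ (ct3 hct)
    have e : (y * x).norm = (x⁻¹ * y⁻¹).norm := by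
      rw [← FreeGroup.norm_inv_eq (x := y * x)]
      congr 1
      group
    omega
  have n4y : y.norm ≤ (x⁻¹ * y⁻¹).norm := by
    have h5 := bound _ _ (ct5 hct)
    have e : (y * x).norm = (x⁻¹ * y⁻¹).norm := by
      rw [← FreeGroup.norm_inv_eq (x := y * x)]
      congr 1
      group
    omega
  -- convert a pair of norm bounds into the cancellation bound
  have conv : ∀ g h : F, g.norm ≤ (g * h).norm → h.norm ≤ (g * h).norm →
      2 * cl g h ≤ g.norm ∧ 2 * cl g h ≤ h.norm := by
    intro g h h1 h2
    have := norm_mul_canc g h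
    omega
  have selfc : ∀ g : F, g ≠ 1 → 2 * cl g g ≤ g.norm ∧ 2 * cl g g ≤ g.norm := by
    intro g hg
    have := two_cl_self_lt hg
    omega
  intro g hg h hh hgh
  simp only [Sset, Set.mem_insert_iff, Set.mem_singleton_iff] at hg hh
  rcases hg with hg | hg | hg | hg <;> rcases hh with hh | hh | hh | hh <;>
    rw [hg, hh] at hgh ⊢
  · exact selfc _ hx1
  · exact absurd (by group) hgh
  · exact conv _ _ n1x n1y
  · exact conv _ _ n2x (by rw [FreeGroup.norm_inv_eq]; exact n2y)
  · exact absurd (by group) hgh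
  · exact selfc _ (inv_ne_one.2 hx1)
  · exact conv _ _ (by rw [FreeGroup.norm_inv_eq]; exact n3x) n3y
  · exact conv _ _ (by rw [FreeGroup.norm_inv_eq]; exact n4x)
      (by rw [FreeGroup.norm_inv_eq]; exact n4y)
  · -- (y, x)
    have hcv := conv x⁻¹ y⁻¹ (by rw [FreeGroup.norm_inv_eq]; exact n4x)
      (by rw [FreeGroup.norm_inv_eq]; exact n4y)
    have e : cl y x = cl x⁻¹ y⁻¹ := by rw [cl_inv y x]
    rw [e]
    constructor
    · have := hcv.2; rwa [FreeGroup.norm_inv_eq] at this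
    · have := hcv.1; rwa [FreeGroup.norm_inv_eq] at this
  · -- (y, x⁻¹)
    have hcv := conv x y⁻¹ n2x (by rw [FreeGroup.norm_inv_eq]; exact n2y)
    have e : cl y x⁻¹ = cl x y⁻¹ := by rw [cl_inv y x⁻¹, inv_inv]
    rw [e]
    constructor
    · have := hcv.2; rwa [FreeGroup.norm_inv_eq] at this
    · rw [FreeGroup.norm_inv_eq]; exact hcv.1
  · exact selfc _ hy1
  · exact absurd (by group) hgh
  · -- (y⁻¹, x)
    have hcv := conv x⁻¹ y (by rw [FreeGroup.norm_inv_eq]; exact n3x) n3y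
    have e : cl y⁻¹ x = cl x⁻¹ y := by rw [cl_inv y⁻¹ x, inv_inv]
    rw [e]
    constructor
    · rw [FreeGroup.norm_inv_eq]; exact hcv.2
    · have := hcv.1; rwa [FreeGroup.norm_inv_eq] at this
  · -- (y⁻¹, x⁻¹)
    have hcv := conv x y n1x n1y
    have e : cl y⁻¹ x⁻¹ = cl x y := by rw [cl_inv y⁻¹ x⁻¹, inv_inv, inv_inv]
    rw [e]
    constructor
    · rw [FreeGroup.norm_inv_eq]; exact hcv.2
    · rw [FreeGroup.norm_inv_eq]; exact hcv.1
  · exact absurd (by group) hgh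
  · exact selfc _ (inv_ne_one.2 hy1)

end Framework


section Badness

/-- `g` is a bad element for the pair: both halves can be cancelled. -/
def Bad (x y g : F) : Prop :=
  ∃ g₁ ∈ Sset x y, ∃ g₂ ∈ Sset x y,
    g₁ * g ≠ 1 ∧ g * g₂ ≠ 1 ∧ g.norm ≤ cl g₁ g + cl g g₂

/-- the exact half-cancellation configuration -/
def Kk (a b : F) (k : ℕ) : Prop := b.norm = 2 * k ∧ cl a b = k ∧ cl b a = k

lemma eater_both {w y : F} (hy : y ≠ 1) {k : ℕ} (h2k : y.norm = 2 * k)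
    (h1 : k ≤ cl w y) (h2 : k ≤ cl w y⁻¹) : False := by
  have hkw : k ≤ w.norm := le_trans h1 (cl_le_left w y)
  have hky : k ≤ y.norm := by omega
  have hkyi : k ≤ (y⁻¹).norm := by rw [FreeGroup.norm_inv_eq]; omega
  have t1 := (le_cl_iff hkw hky).1 h1
  have t2 := (le_cl_iff hkw hkyi).1 h2
  rw [inv_word, ← List.map_take] at t2
  -- t2 : map inv1 (ry.take k) = map inv1 (rw.take k)
  have t3 : y.toWord.reverse.take k = w.toWord.reverse.take k := by
    have hi := List.map_injective_iff.2 inv1_injective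
    exact hi t2
  have t4 : y.toWord.take k = (y.toWord.reverse.take k).map inv1 := by
    rw [t3]; exact t1
  have hcy : k ≤ cl y y := (le_cl_iff hky hky).2 t4
  have := two_cl_self_lt hy
  omega

lemma cl_self_lemma {y : F} (hy : y ≠ 1) {k : ℕ} (h2k : y.norm = 2 * k)
    (h : cl y y = k) : False := by
  have := two_cl_self_lt hy
  omega

lemma badElim_y {x y : F}
    (hN : ∀ g ∈ Sset x y, ∀ h ∈ Sset x y, g * h ≠ 1 →
      2 * cl g h ≤ g.norm ∧ 2 * cl g h ≤ h.norm)
    (hy1 : y ≠ 1)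
    (hbad : Bad x y y ∨ Bad x y y⁻¹) :
    ∃ k, 0 < k ∧ (Kk x y k ∨ Kk x⁻¹ y k) := by
  have hyS : y ∈ Sset x y := by simp [Sset]
  have hyiS : y⁻¹ ∈ Sset x y := by simp [Sset]
  have hny : y.norm ≠ 0 := fun h => hy1 (FreeGroup.norm_eq_zero.1 h)
  rcases hbad with ⟨g₁, hg₁, g₂, hg₂, ha1, ha2, hsum⟩ | ⟨g₁, hg₁, g₂, hg₂, ha1, ha2, hsum⟩
  · -- bad y
    have b1 := hN g₁ hg₁ y hyS ha1
    have b2 := hN y hyS g₂ hg₂ ha2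
    have hc1 : 2 * cl g₁ y = y.norm := by omega
    have hc2 : 2 * cl y g₂ = y.norm := by omega
    set k := cl g₁ y with hkdef
    have h2k : y.norm = 2 * k := hc1.symm
    have hk : 0 < k := by omega
    have hc2' : cl y g₂ = k := by omega
    refine ⟨k, hk, ?_⟩
    simp only [Sset, Set.mem_insert_iff, Set.mem_singleton_iff] at hg₁ hg₂
    rcases hg₁ with hg₁ | hg₁ | hg₁ | hg₁
    · rcases hg₂ with hg₂ | hg₂ | hg₂ | hg₂
      · -- (x, x) : Kk x y k
        exact Or.inl ⟨h2k, by rw [← hg₁], by rw [← hg₂]; exact hc2'⟩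
      · -- (x, x⁻¹) : impossible
        exfalso
        have e : cl y x⁻¹ = cl x y⁻¹ := by rw [cl_inv y x⁻¹, inv_inv]
        refine eater_both (w := x) hy1 h2k ?_ ?_
        · rw [← hg₁]
        · rw [← e, ← hg₂, hc2']
      · exfalso
        rw [hg₂] at hc2'
        exact cl_self_lemma hy1 h2k hc2'
      · exfalso
        rw [hg₂] at ha2
        exact ha2 (by group)
    · rcases hg₂ with hg₂ | hg₂ | hg₂ | hg₂
      · -- (x⁻¹, x) : impossible
        exfalso
        have e : cl y x = cl x⁻¹ y⁻¹ := by rw [cl_inv y x]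
        refine eater_both (w := x⁻¹) hy1 h2k ?_ ?_
        · rw [← hg₁]
        · rw [← e, ← hg₂, hc2']
      · -- (x⁻¹, x⁻¹) : Kk x⁻¹ y k
        exact Or.inr ⟨h2k, by rw [← hg₁], by rw [← hg₂]; exact hc2'⟩
      · exfalso
        rw [hg₂] at hc2'
        exact cl_self_lemma hy1 h2k hc2'
      · exfalso
        rw [hg₂] at ha2
        exact ha2 (by group)
    · -- g₁ = y : impossible
      exfalso
      rw [hg₁] at hkdef
      exact cl_self_lemma hy1 h2k hkdef.symm
    · -- g₁ = y⁻¹ : excluded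
      exfalso
      rw [hg₁] at ha1
      exact ha1 (by group)
  · -- bad y⁻¹
    have b1 := hN g₁ hg₁ y⁻¹ hyiS ha1
    have b2 := hN y⁻¹ hyiS g₂ hg₂ ha2
    have hni : (y⁻¹).norm = y.norm := FreeGroup.norm_inv_eq
    rw [hni] at b1 b2 hsum
    have hc1 : 2 * cl g₁ y⁻¹ = y.norm := by omega
    have hc2 : 2 * cl y⁻¹ g₂ = y.norm := by omega
    set k := cl g₁ y⁻¹ with hkdef
    have h2k : y.norm = 2 * k := hc1.symm
    have hk : 0 < k := by omega
    have hc2' : cl y⁻¹ g₂ = k := by omega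
    refine ⟨k, hk, ?_⟩
    simp only [Sset, Set.mem_insert_iff, Set.mem_singleton_iff] at hg₁ hg₂
    rcases hg₁ with hg₁ | hg₁ | hg₁ | hg₁
    · rcases hg₂ with hg₂ | hg₂ | hg₂ | hg₂
      · -- (x, x) : Kk x⁻¹ y k
        refine Or.inr ⟨h2k, ?_, ?_⟩
        · -- cl x⁻¹ y = cl y⁻¹ x = k
          have e : cl x⁻¹ y = cl y⁻¹ x := by rw [cl_inv x⁻¹ y, inv_inv]
          rw [e, ← hg₂]
          exact hc2'
        · -- cl y x⁻¹ = cl x y⁻¹ = k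
          have e : cl y x⁻¹ = cl x y⁻¹ := by rw [cl_inv y x⁻¹, inv_inv]
          rw [e, ← hg₁]
      · -- (x, x⁻¹) : impossible
        exfalso
        have e : cl y⁻¹ x⁻¹ = cl x y := by rw [cl_inv y⁻¹ x⁻¹, inv_inv, inv_inv]
        refine eater_both (w := x) hy1 h2k ?_ ?_
        · rw [← e, ← hg₂, hc2']
        · rw [← hg₁]
      · -- g₂ = y : excluded
        exfalso
        rw [hg₂] at ha2
        exact ha2 (by group)
      · -- g₂ = y⁻¹ : self-eating
        exfalso
        rw [hg₂] at hc2'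
        have e : cl y⁻¹ y⁻¹ = cl y y := by rw [cl_inv y⁻¹ y⁻¹, inv_inv]
        rw [e] at hc2'
        exact cl_self_lemma hy1 h2k hc2'
    · rcases hg₂ with hg₂ | hg₂ | hg₂ | hg₂
      · -- (x⁻¹, x) : impossible
        exfalso
        have e : cl y⁻¹ x = cl x⁻¹ y := by rw [cl_inv y⁻¹ x, inv_inv]
        refine eater_both (w := x⁻¹) hy1 h2k ?_ ?_
        · rw [← e, ← hg₂, hc2']
        · rw [← hg₁]
      · -- (x⁻¹, x⁻¹) : Kk x y k
        refine Or.inl ⟨h2k, ?_, ?_⟩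
        · -- cl x y = cl y⁻¹ x⁻¹ = k
          have e : cl x y = cl y⁻¹ x⁻¹ := cl_inv x y
          rw [e, ← hg₂]
          exact hc2'
        · -- cl y x = cl x⁻¹ y⁻¹ = k
          have e : cl y x = cl x⁻¹ y⁻¹ := cl_inv y x
          rw [e, ← hg₁]
      · exfalso
        rw [hg₂] at ha2
        exact ha2 (by group)
      · exfalso
        rw [hg₂] at hc2'
        have e : cl y⁻¹ y⁻¹ = cl y y := by rw [cl_inv y⁻¹ y⁻¹, inv_inv]
        rw [e] at hc2'
        exact cl_self_lemma hy1 h2k hc2'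
    · -- g₁ = y : excluded
      exfalso
      rw [hg₁] at ha1
      exact ha1 (by group)
    · -- g₁ = y⁻¹ : self-eating
      exfalso
      rw [hg₁] at hkdef
      have e : cl y⁻¹ y⁻¹ = cl y y := by rw [cl_inv y⁻¹ y⁻¹, inv_inv]
      rw [e] at hkdef
      exact cl_self_lemma hy1 h2k hkdef.symm

/-- global bad-element elimination -/
lemma badElim {x y : F} (hmc : MinCtrex x y) (hbad : ∃ g ∈ Sset x y, Bad x y g) :
    ∃ k, 0 < k ∧ (Kk x y k ∨ Kk x⁻¹ y k ∨ Kk y x k ∨ Kk y⁻¹ x k) := by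
  obtain ⟨hx1, hy1, -, -, -, -⟩ := pair_facts hmc.1.1
  have hN := mc_cl hmc
  have hNs := mc_cl (minctrex_swap hmc)
  obtain ⟨g, hg, hb⟩ := hbad
  have hbswap : ∀ g, Bad x y g → Bad y x g := by
    intro g ⟨g₁, h1, g₂, h2, a1, a2, a3⟩
    exact ⟨g₁, by rwa [Sset_comm], g₂, by rwa [Sset_comm], a1, a2, a3⟩
  simp only [Sset, Set.mem_insert_iff, Set.mem_singleton_iff] at hg
  rcases hg with hg | hg | hg | hg
  · obtain ⟨k, hk, hK⟩ := badElim_y hNs hx1 (Or.inl (hg ▸ hbswap g hb))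
    rcases hK with h | h
    · exact ⟨k, hk, Or.inr (Or.inr (Or.inl h))⟩
    · exact ⟨k, hk, Or.inr (Or.inr (Or.inr h))⟩
  · obtain ⟨k, hk, hK⟩ := badElim_y hNs hx1 (Or.inr (hg ▸ hbswap g hb))
    rcases hK with h | h
    · exact ⟨k, hk, Or.inr (Or.inr (Or.inl h))⟩
    · exact ⟨k, hk, Or.inr (Or.inr (Or.inr h))⟩
  · obtain ⟨k, hk, hK⟩ := badElim_y hN hy1 (Or.inl (hg ▸ hb))
    rcases hK with h | h
    · exact ⟨k, hk, Or.inl h⟩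
    · exact ⟨k, hk, Or.inr (Or.inl h)⟩
  · obtain ⟨k, hk, hK⟩ := badElim_y hN hy1 (Or.inr (hg ▸ hb))
    rcases hK with h | h
    · exact ⟨k, hk, Or.inl h⟩
    · exact ⟨k, hk, Or.inr (Or.inl h)⟩

end Badness


section Good

open Subgroup

/-- evaluation of letters -/
def Gl (x y : F) (p : V) : F :=
  bif p.2 then (bif p.1 then x else y) else (bif p.1 then x else y)⁻¹

lemma Gl_inv1 (x y : F) (p : V) : Gl x y (inv1 p) = (Gl x y p)⁻¹ := by
  obtain ⟨a, s⟩ := p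
  cases a <;> cases s <;> simp [Gl, inv1]

lemma Gl_inj {x y : F} (hxy : x ≠ y) (hxyi : x ≠ y⁻¹) (hxx : x ≠ x⁻¹) (hyy : y ≠ y⁻¹) :
    ∀ p q : V, Gl x y p = Gl x y q → p = q := by
  rintro ⟨a₁, s₁⟩ ⟨a₂, s₂⟩ hpq
  cases a₁ <;> cases a₂ <;> cases s₁ <;> cases s₂ <;>
    simp only [Gl, cond_true, cond_false] at hpq <;>
    first
      | rfl
      | exact absurd hpq hxx
      | exact absurd hpq.symm hxx
      | exact absurd hpq hyy
      | exact absurd hpq.symm hyy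
      | exact absurd hpq hxy
      | exact absurd hpq.symm hxy
      | exact absurd hpq hxyi
      | exact absurd hpq.symm hxyi
      | exact absurd (show x = y⁻¹ by rw [← hpq, inv_inv]) hxyi
      | exact absurd (show x = y⁻¹ by rw [hpq, inv_inv]) hxyi
      | exact absurd (inv_injective hpq) hxy
      | exact absurd (inv_injective hpq).symm hxy
      | exact absurd (inv_injective hpq.symm) hxy

lemma main_extract {x y : F} (hmc : MinCtrex x y)
    (hS3 : ∀ g₁ ∈ Sset x y, ∀ g ∈ Sset x y, ∀ g₂ ∈ Sset x y, g₁ * g ≠ 1 → g * g₂ ≠ 1 →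
      cl g₁ g + cl g g₂ < FreeGroup.norm g) :
    ∀ a : F, a ≠ 1 → a.norm = 1 → a ∈ Sset x y := by
  obtain ⟨hx1, hy1, hxy, hxyi, hxx, hyy⟩ := pair_facts hmc.1.1
  have hS1 : ∀ g ∈ Sset x y, g ≠ 1 := mem_Sset_ne_one hmc.1.1
  have hS2 := mc_cl hmc
  intro a ha h1
  set f : Bool → F := fun b => bif b then x else y with hf
  have hrange : Set.range f = {x, y} := by
    ext z
    simp only [Set.mem_range, Set.mem_insert_iff, Set.mem_singleton_iff]
    constructor
    · rintro ⟨b, rfl⟩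
      cases b
      · right; rfl
      · left; rfl
    · rintro (rfl | rfl)
      · exact ⟨true, rfl⟩
      · exact ⟨false, rfl⟩
  have hsurj : Function.Surjective (FreeGroup.lift f) := by
    rw [← MonoidHom.range_eq_top, FreeGroup.range_lift_eq_closure, hrange, hmc.1.1]
  obtain ⟨z, hz⟩ := hsurj a
  have hz1 : z ≠ 1 := by
    rintro rfl
    rw [show (FreeGroup.lift f) (1 : F) = 1 from _root_.map_one _] at hz
    exact ha hz.symm
  have hGf : ∀ p : V, Gl x y p = bif p.2 then f p.1 else (f p.1)⁻¹ := by
    rintro ⟨b, s⟩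
    cases b <;> cases s <;> rfl
  have hprod : (z.toWord.map (Gl x y)).prod = a := by
    have h2 : FreeGroup.lift f z = FreeGroup.lift f (FreeGroup.mk z.toWord) := by
      rw [FreeGroup.mk_toWord]
    rw [FreeGroup.lift_mk] at h2
    rw [← hz, h2]
    rfl
  have hmem : ∀ g ∈ z.toWord.map (Gl x y), g ∈ Sset x y := by
    intro g hg
    obtain ⟨p, _, rfl⟩ := List.mem_map.1 hg
    obtain ⟨b, s⟩ := p
    cases b <;> cases s <;> simp [Gl, Sset]
  have hchain : List.Chain' (fun u v => u * v ≠ 1) (z.toWord.map (Gl x y)) := by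
    rw [List.Chain', List.isChain_map]
    refine List.IsChain.imp ?_ (reduced_toWord z)
    intro p q hrel hcon
    have h2 : Gl x y p = (Gl x y q)⁻¹ := mul_eq_one_iff_eq_inv.1 hcon
    rw [← Gl_inv1] at h2
    exact (rel_iff.1 hrel) (Gl_inj hxy hxyi hxx hyy p (inv1 q) h2)
  set gs := z.toWord.map (Gl x y) with hgs
  have hne : gs ≠ [] := by
    rw [hgs]
    simp only [ne_eq, List.map_eq_nil_iff]
    exact fun h => hz1 (FreeGroup.toWord_eq_nil_iff.1 h)
  have hsplit : gs.dropLast ++ [gs.getLast hne] = gs := List.dropLast_append_getLast hne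
  have hlen := chain_norm (Sset x y) hS1 hS2 hS3 gs.dropLast (gs.getLast hne)
    (fun u hu => hmem u (List.dropLast_subset gs hu))
    (hmem _ (List.getLast_mem hne))
    (by rw [hsplit]; exact hchain)
  rw [hsplit, hprod, h1] at hlen
  have hlen1 : gs.length = 1 := by
    have h3 := List.length_dropLast (xs := gs)
    have h4 : 0 < gs.length := List.length_pos_iff.2 hne
    omega
  obtain ⟨g0, hg0⟩ := List.length_eq_one_iff.1 hlen1
  have : a = g0 := by rw [← hprod, hg0, List.prod_singleton]
  rw [this]
  exact hmem g0 (by rw [hg0]; simp)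

lemma good {x y : F} (hmc : MinCtrex x y) (hnb : ∀ g ∈ Sset x y, ¬ Bad x y g) : False := by
  obtain ⟨hx1, hy1, hxy, hxyi, hxx, hyy⟩ := pair_facts hmc.1.1
  have hnp : ¬ Pp x y := hmc.1.2
  have hS3 : ∀ g₁ ∈ Sset x y, ∀ g ∈ Sset x y, ∀ g₂ ∈ Sset x y, g₁ * g ≠ 1 → g * g₂ ≠ 1 →
      cl g₁ g + cl g g₂ < FreeGroup.norm g := by
    intro g₁ h1 g h2 g₂ h3 a1 a2
    by_contra hcon
    push_neg at hcon
    exact hnb g h2 ⟨g₁, h1, g₂, h3, a1, a2, hcon⟩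
  have hA := main_extract hmc hS3 (FreeGroup.of true) (FreeGroup.of_ne_one true)
    (FreeGroup.norm_of true)
  have hB := main_extract hmc hS3 (FreeGroup.of false) (FreeGroup.of_ne_one false)
    (FreeGroup.norm_of false)
  set a : F := FreeGroup.of true with hadef
  set b : F := FreeGroup.of false with hbdef
  have d1 : a ≠ b := fun h => Bool.noConfusion (FreeGroup.of_injective h)
  have d2 : a ≠ b⁻¹ := by
    intro h
    have := congrArg FreeGroup.toWord h
    rw [FreeGroup.toWord_of, FreeGroup.toWord_inv, FreeGroup.toWord_of] at this
    simp [FreeGroup.invRev] at this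
  -- the eight conjugacy facts
  have pp_ab : Pp a b := Or.inl (IsConj.refl _)
  have pp_abi : Pp a b⁻¹ := Or.inr (isConj_iff.2 ⟨b, by unfold Q; rw [hadef, hbdef]; group⟩)
  have pp_aib : Pp a⁻¹ b := Or.inr (isConj_iff.2 ⟨a, by unfold Q; rw [hadef, hbdef]; group⟩)
  have pp_aibi : Pp a⁻¹ b⁻¹ := Or.inl (isConj_iff.2 ⟨b * a, by unfold Q; rw [hadef, hbdef]; group⟩)
  have pp_ba : Pp b a := Or.inr (IsConj.refl _)
  have pp_bai : Pp b a⁻¹ := Or.inl (isConj_iff.2 ⟨a, by unfold Q; rw [hadef, hbdef]; group⟩)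
  have pp_bia : Pp b⁻¹ a := Or.inl (isConj_iff.2 ⟨b, by unfold Q; rw [hadef, hbdef]; group⟩)
  have pp_biai : Pp b⁻¹ a⁻¹ := Or.inr (isConj_iff.2 ⟨a * b, by unfold Q; rw [hadef, hbdef]; group⟩)
  simp only [Sset, Set.mem_insert_iff, Set.mem_singleton_iff] at hA hB
  rcases hA with hA | hA | hA | hA <;> rcases hB with hB | hB | hB | hB
  · exact d1 (hA.trans hB.symm)
  · exact d2 (by rw [hB, inv_inv]; exact hA)
  · exact hnp (by rw [← hA, ← hB]; exact pp_ab)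
  · exact hnp (by rw [← hA, show y = b⁻¹ from by rw [hB, inv_inv]]; exact pp_abi)
  · exact absurd (show a = b⁻¹ by rw [hA, hB]) d2
  · exact d1 (by rw [hA, hB])
  · exact hnp (by rw [show x = a⁻¹ from by rw [hA, inv_inv], ← hB]; exact pp_aib)
  · exact hnp (by rw [show x = a⁻¹ from by rw [hA, inv_inv],
      show y = b⁻¹ from by rw [hB, inv_inv]]; exact pp_aibi)
  · exact hnp (by rw [← hB, ← hA]; exact pp_ba)
  · exact hnp (by rw [show x = b⁻¹ from by rw [hB, inv_inv], ← hA]; exact pp_bia)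
  · exact d1 (hA.trans hB.symm)
  · exact d2 (by rw [hB, inv_inv]; exact hA)
  · exact hnp (by rw [← hB, show y = a⁻¹ from by rw [hA, inv_inv]]; exact pp_bai)
  · exact hnp (by rw [show x = b⁻¹ from by rw [hB, inv_inv],
      show y = a⁻¹ from by rw [hA, inv_inv]]; exact pp_biai)
  · exact absurd (show a = b⁻¹ by rw [hA, hB]) d2
  · exact d1 (by rw [hA, hB])

end Good


section Step

open Subgroup

lemma step {x y : F} (hmc : MinCtrex x y) {k : ℕ} (hk : 0 < k) (hK : Kk x y k) : False := by
  obtain ⟨h2k, hcxy, hcyx⟩ := hK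
  obtain ⟨hx1, hy1, hxy, hxyi, hxx, hyy⟩ := pair_facts hmc.1.1
  have hN := mc_cl hmc
  have hxS : x ∈ Sset x y := by simp [Sset]
  have hyS : y ∈ Sset x y := by simp [Sset]
  have hxyne : x * y ≠ 1 := fun h => hxyi (mul_eq_one_iff_eq_inv.1 h)
  have hnormxy : (x * y).norm = x.norm := by
    have := norm_mul_canc x y
    omega
  have hxnorm : 2 * k ≤ x.norm := by
    have := (hN x hxS y hyS hxyne).1
    omega
  have hky : k ≤ y.norm := by omega
  have hkx : k ≤ x.norm := by omega
  have hlx : x.toWord.length = x.norm := (norm_def x).symm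
  have hly : y.toWord.length = y.norm := (norm_def y).symm
  have t2 := (le_cl_iff hky hkx).1 (le_of_eq hcyx.symm)
  -- rule out x.norm = 2k (would force x = y⁻¹)
  have hx2k : 2 * k < x.norm := by
    rcases Nat.lt_or_ge (2 * k) x.norm with h | h
    · exact h
    exfalso
    have hxeq : x.norm = 2 * k := by omega
    have t1 := (le_cl_iff hkx hky).1 (le_of_eq hcxy.symm)
    have hrx : x.toWord.reverse.take k = (y.toWord.take k).map inv1 := by
      have h5 := congrArg (List.map inv1) t1
      rw [List.map_map] at h5
      have hid : (inv1 ∘ inv1) = id := by funext z; simp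
      rw [hid, List.map_id] at h5
      exact h5.symm
    have e1 : x.toWord.take k = ((y⁻¹).toWord).take k := by
      rw [inv_word, ← List.map_take]
      exact t2
    have e2 : x.toWord.drop k = ((y⁻¹).toWord).drop k := by
      rw [inv_word, ← List.map_drop]
      have d1 : (x.toWord.reverse.take k).reverse = x.toWord.drop k := by
        rw [List.reverse_take, List.reverse_reverse, List.length_reverse]
        congr 1
        omega
      have d2 : (y.toWord.take k).reverse = y.toWord.reverse.drop k := by
        rw [List.reverse_take]
        congr 1
        omega
      rw [← d1, hrx, ← List.map_reverse, d2]
    have hxword : x.toWord = (y⁻¹).toWord := by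
      rw [← List.take_append_drop k x.toWord, ← List.take_append_drop k ((y⁻¹).toWord), e1, e2]
    exact hxyi (FreeGroup.toWord_injective hxword)
  -- the replacement pair
  set u₁ := x * y with hu₁
  have hnu : u₁.norm = x.norm := hnormxy
  have hmc1 : MinCtrex u₁ y :=
    ⟨ct1 hmc.1, fun x' y' hc => by
      have := hmc.2 x' y' hc
      omega⟩
  obtain ⟨hu1, -, hu₁y, hu₁yi, -, -⟩ := pair_facts hmc1.1.1
  have hNu := mc_cl hmc1
  have hword : u₁.toWord = x.toWord.take (x.toWord.length - cl x y) ++ y.toWord.drop (cl x y) :=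
    toWord_mul' x y
  have hrevtake : u₁.toWord.reverse.take k = y.toWord.reverse.take k := by
    rw [hword, List.reverse_append]
    have hd : (y.toWord.drop (cl x y)).reverse = y.toWord.reverse.take k := by
      rw [List.reverse_drop]
      congr 1
      rw [hcxy]
      omega
    rw [hd, List.take_append]
    have hlen : (y.toWord.reverse.take k).length = k := by
      rw [List.length_take, List.length_reverse]
      exact min_eq_left (by omega)
    rw [List.take_of_length_le (le_of_eq hlen), hlen]
    simp
  have hprefix : u₁.toWord.take k = x.toWord.take k := by
    have hmin1 : min k (x.toWord.length - cl x y) = k := by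
      rw [hcxy]
      exact min_eq_left (by omega)
    have hmin2 : min (x.toWord.length - cl x y) x.toWord.length = x.toWord.length - cl x y :=
      min_eq_left (by omega)
    rw [hword, List.take_append, List.take_take, hmin1, List.length_take, hmin2]
    have hz : k - (x.toWord.length - cl x y) = 0 := by rw [hcxy]; omega
    rw [hz]
    simp
  have hu₁S : u₁ ∈ Sset u₁ y := by simp [Sset]
  have hySu : y ∈ Sset u₁ y := by simp [Sset]
  have hyiSu : y⁻¹ ∈ Sset u₁ y := by simp [Sset]
  -- no bad elements for the new pair
  have hnbu : ∀ g ∈ Sset u₁ y, ¬ Bad u₁ y g := by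
    intro g hg hb
    obtain ⟨k', hk', hK'⟩ := badElim hmc1 ⟨g, hg, hb⟩
    have hclyy := two_cl_self_lt hy1
    rcases hK' with ⟨e1, e2, e3⟩ | ⟨e1, e2, e3⟩ | ⟨e1, e2, e3⟩ | ⟨e1, e2, e3⟩
    · -- Kk u₁ y k'
      have hkk : k' = k := by omega
      subst hkk
      have hku : k' ≤ u₁.norm := by omega
      have t := (le_cl_iff hku hky).1 (le_of_eq e2.symm)
      rw [hrevtake] at t
      have : k' ≤ cl y y := (le_cl_iff hky hky).2 t
      omega
    · -- Kk u₁⁻¹ y k'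
      have hkk : k' = k := by omega
      subst hkk
      have hku : k' ≤ (u₁⁻¹).norm := by rw [FreeGroup.norm_inv_eq]; omega
      have t := (le_cl_iff hku hky).1 (le_of_eq e2.symm)
      rw [rinv_word, ← List.map_take, hprefix] at t
      rw [t2] at t
      rw [List.map_map] at t
      have hid : (inv1 ∘ inv1) = id := by funext z; simp
      rw [hid, List.map_id] at t
      have : k' ≤ cl y y := (le_cl_iff hky hky).2 t
      omega
    · -- Kk y u₁ k' : too short
      have hadj : y * u₁ ≠ 1 := by
        intro h
        exact hu₁yi (by rw [mul_eq_one_iff_eq_inv.1 h, inv_inv])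
      have := (hNu y hySu u₁ hu₁S hadj).1
      rw [e2] at this
      omega
    · -- Kk y⁻¹ u₁ k' : too short
      have hadj : y⁻¹ * u₁ ≠ 1 := by
        intro h
        have h2 := inv_injective (mul_eq_one_iff_eq_inv.1 h)
        exact hu₁y h2.symm
      have := (hNu y⁻¹ hyiSu u₁ hu₁S hadj).1
      rw [e2, FreeGroup.norm_inv_eq] at this
      omega
  exact good hmc1 hnbu

end Step

section Main

open Subgroup

theorem key (x y : F) (hcl : closure ({x, y} : Set F) = ⊤) : Pp x y := by
  by_contra hnp
  have hex : ∃ n, ∃ u v : F, Ctrex u v ∧ u.norm + v.norm = n :=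
    ⟨x.norm + y.norm, x, y, ⟨hcl, hnp⟩, rfl⟩
  classical
  obtain ⟨u, v, huv, hn⟩ := Nat.find_spec hex
  have hmc : MinCtrex u v := by
    refine ⟨huv, fun u' v' hc => ?_⟩
    rw [hn]
    by_contra hlt
    push_neg at hlt
    exact Nat.find_min hex hlt ⟨u', v', hc, rfl⟩
  by_cases hbad : ∃ g ∈ Sset u v, Bad u v g
  · obtain ⟨k, hk, hK⟩ := badElim hmc hbad
    rcases hK with hK | hK | hK | hK
    · exact step hmc hk hK
    · exact step (minctrex_inv hmc) hk hK
    · exact step (minctrex_swap hmc) hk hK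
    · exact step (minctrex_inv (minctrex_swap hmc)) hk hK
  · push_neg at hbad
    exact good hmc hbad

theorem key' (x y : F) (hcl : closure ({x, y} : Set F) = ⊤) :
    IsConj (x * y * x⁻¹ * y⁻¹)
        (FreeGroup.of true * FreeGroup.of false * (FreeGroup.of true)⁻¹ * (FreeGroup.of false)⁻¹) ∨
      IsConj (x * y * x⁻¹ * y⁻¹)
        (FreeGroup.of false * FreeGroup.of true * (FreeGroup.of false)⁻¹ * (FreeGroup.of true)⁻¹) :=
  key x y hcl

end Main

end NielsenWord


open Subgroup in
lemma closure_AB : closure ({A, B} : Set F2) = ⊤ := by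
  have h := FreeGroup.closure_range_of Bool
  have hr : Set.range (FreeGroup.of : Bool → F2) = {A, B} := by
    ext z
    simp only [Set.mem_range, Set.mem_insert_iff, Set.mem_singleton_iff]
    constructor
    · rintro ⟨b, rfl⟩
      cases b
      · right; rfl
      · left; rfl
    · rintro (rfl | rfl)
      · exact ⟨true, rfl⟩
      · exact ⟨false, rfl⟩
  rwa [hr] at h

theorem stmt_0 (φ : F2 ≃* F2) :
    IsConj (φ (A * B * A⁻¹ * B⁻¹)) (A * B * A⁻¹ * B⁻¹) ∨
      IsConj (φ (A * B * A⁻¹ * B⁻¹)) (B * A * B⁻¹ * A⁻¹) := by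
  have hcl : Subgroup.closure ({φ A, φ B} : Set F2) = ⊤ := by
    have h1 : Subgroup.map φ.toMonoidHom (Subgroup.closure ({A, B} : Set F2))
        = Subgroup.closure ({φ A, φ B} : Set F2) := by
      rw [MonoidHom.map_closure]
      congr 1
      exact Set.image_pair _ _ _
    rw [← h1, closure_AB]
    exact Subgroup.map_top_of_surjective _ φ.surjective
  have hkey := NielsenWord.key' (φ A) (φ B) hcl
  have he : φ (A * B * A⁻¹ * B⁻¹) = φ A * φ B * (φ A)⁻¹ * (φ B)⁻¹ := by
    simp only [map_mul, map_inv]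
  rw [he]
  exact hkey
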